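/- Let I be a finite set of applicants, V : I → ℝ the job's utility from each applicant, and P : I → ℝ acceptance probabilities with 0 < P i ≤ 1 for every i. Suppose h : I → ℝ is a hiring rule (0 ≤ h i ≤ 1 for all i) and there exist distinct applicants i, i' with V i > V i', h i < 1, and h i' > 0. Then there exists ε > 0 such that the modified rule h' defined by h' i = h i + ε / P i, h' i' = h i' − ε / P i', and h' m = h m for all other m, is again a hiring rule (all values in [0,1]), has the same expected cohort size ∑_m P m · h' m = ∑_m P m · h m, and has strictly larger expected utility ∑_m V m · P m · h' m > ∑_m V m · P m · h m. -/

import Mathlib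

/-- Exchange step in the proof of Proposition 1 (jobs follow cutoff hiring rules):
given a hiring rule `h` on a finite set of applicants that is not monotone between
two applicants `i, i'` (with `V i > V i'`, `h i < 1`, `h i' > 0`), there is an
`ε > 0` such that shifting hiring probability from `i'` to `i` (scaled by the
acceptance probabilities) yields another hiring rule with the same expected
cohort size and strictly larger expected utility. -/
theorem exchange_step {I : Type*} [Fintype I] [DecidableEq I]
    (V P : I → ℝ) (hP : ∀ i, 0 < P i ∧ P i ≤ 1)
    (h : I → ℝ) (hh : ∀ i, 0 ≤ h i ∧ h i ≤ 1)
    (i i' : I) (hne : i ≠ i') (hV : V i > V i')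
    (hi : h i < 1) (hi' : h i' > 0) :
    ∃ ε > (0 : ℝ),
      let h' : I → ℝ := fun m =>
        if m = i then h i + ε / P i
        else if m = i' then h i' - ε / P i'
        else h m
      (∀ m, 0 ≤ h' m ∧ h' m ≤ 1) ∧
      (∑ m, P m * h' m) = (∑ m, P m * h m) ∧
      (∑ m, V m * P m * h' m) > (∑ m, V m * P m * h m) := by
  obtain ⟨hPi, _⟩ := hP i
  obtain ⟨hPi', _⟩ := hP i'
  set ε : ℝ := min ((1 - h i) * P i) (h i' * P i') with hε
  have hεpos : 0 < ε := lt_min (mul_pos (by linarith) hPi) (mul_pos hi' hPi')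
  have hdiv1 : ε / P i ≤ 1 - h i := by
    rw [div_le_iff₀ hPi]; exact min_le_left _ _
  have hdiv2 : ε / P i' ≤ h i' := by
    rw [div_le_iff₀ hPi']; exact min_le_right _ _
  refine ⟨ε, hεpos, ?_⟩
  intro h'
  have hval : ∀ m, h' m - h m = if m = i then ε / P i else if m = i' then - (ε / P i') else 0 := by
    intro m
    simp only [h']
    by_cases hm : m = i
    · subst hm; simp
    · by_cases hm' : m = i'
      · subst hm'; simp [hm]
      · simp [hm, hm']
  have key : ∀ f : I → ℝ, (∑ m, f m * h' m) - (∑ m, f m * h m)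
      = f i * (ε / P i) - f i' * (ε / P i') := by
    intro f
    rw [← Finset.sum_sub_distrib]
    have : ∀ m, f m * h' m - f m * h m = f m * (h' m - h m) := fun m => by ring
    simp_rw [this]
    have hi'mem : i' ∈ Finset.univ.erase i := Finset.mem_erase.2 ⟨Ne.symm hne, Finset.mem_univ _⟩
    rw [← Finset.add_sum_erase _ _ (Finset.mem_univ i),
        ← Finset.add_sum_erase _ _ hi'mem]
    have hrest : ∑ m ∈ (Finset.univ.erase i).erase i', f m * (h' m - h m) = 0 := by
      apply Finset.sum_eq_zero
      intro m hm
      obtain ⟨hm1, hm2⟩ := Finset.mem_erase.1 hm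
      obtain hm3 := (Finset.mem_erase.1 hm2).1
      rw [hval m, if_neg hm3, if_neg hm1, mul_zero]
    rw [hrest, hval i, hval i', if_pos rfl, if_neg (Ne.symm hne), if_pos rfl]
    ring
  refine ⟨?_, ?_, ?_⟩
  · intro m
    simp only [h']
    by_cases hm : m = i
    · rw [if_pos hm]
      constructor
      · have := (hh i).1
        have : 0 < ε / P i := div_pos hεpos hPi
        linarith [(hh i).1]
      · linarith
    · by_cases hm' : m = i'
      · rw [if_neg hm, if_pos hm']
        constructor
        · linarith
        · have := (hh i').2
          have : 0 < ε / P i' := div_pos hεpos hPi'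
          linarith [(hh i').2]
      · rw [if_neg hm, if_neg hm']; exact hh m
  · have := key P
    have hc : P i * (ε / P i) - P i' * (ε / P i') = 0 := by
      field_simp; ring
    linarith
  · have := key (fun m => V m * P m)
    have h1 : V i * P i * (ε / P i) = V i * ε := by field_simp
    have h2 : V i' * P i' * (ε / P i') = V i' * ε := by field_simp
    rw [h1, h2] at this
    nlinarith
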